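/- Let A be a symmetric positive definite n×n real matrix with ‖I − A‖ < 1. Then the scalarized Newton–Schulz iteration z_{k+1} = ½ z_k (3 − a z_k²) applied to each eigenvalue a of A, started at z₀ = 1, converges to a^{-1/2}; consequently Z_k → A^{-1/2} for the matrix iteration Y₀ = A, Z₀ = I, T_k = 3I − Z_kY_k, Y_{k+1} = ½Y_kT_k, Z_{k+1} = ½T_kZ_k. -/

import Mathlib

open Matrix Filter

/-- Operator norm of a real matrix, induced by Euclidean norms. -/
noncomputable def opNorm {m n : ℕ} (A : Matrix (Fin m) (Fin n) ℝ) : ℝ :=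
  ‖LinearMap.toContinuousLinearMap (Matrix.toEuclideanLin A)‖

/-- Scalar Newton–Schulz iteration. -/
noncomputable def nsIter (a : ℝ) : ℕ → ℝ
  | 0 => 1
  | (k + 1) => (1 / 2) * nsIter a k * (3 - a * (nsIter a k) ^ 2)

lemma eig_abs_le_opNorm {n : ℕ} (M : Matrix (Fin n) (Fin n) ℝ) {a : ℝ} {v : Fin n → ℝ}
    (hv : v ≠ 0) (h : M *ᵥ v = a • v) : |a| ≤ opNorm M := by
  set v' : EuclideanSpace ℝ (Fin n) := (WithLp.equiv 2 (Fin n → ℝ)).symm v with hv'def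
  have hv0 : v' ≠ 0 := by
    intro h0
    exact hv (by simpa [hv'def] using congrArg (WithLp.equiv 2 (Fin n → ℝ)) h0)
  have happ : Matrix.toEuclideanLin M v' = a • v' := by
    rw [hv'def]
    exact congrArg (WithLp.toLp 2) h
  have hb : ‖(LinearMap.toContinuousLinearMap (Matrix.toEuclideanLin M)) v'‖
      ≤ opNorm M * ‖v'‖ := ContinuousLinearMap.le_opNorm _ _
  have hcoe : (LinearMap.toContinuousLinearMap (Matrix.toEuclideanLin M)) v'
      = Matrix.toEuclideanLin M v' := rfl
  rw [hcoe, happ, norm_smul, Real.norm_eq_abs] at hb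
  have hv'pos : 0 < ‖v'‖ := norm_pos_iff.mpr hv0
  exact le_of_mul_le_mul_right hb hv'pos

lemma scalar_conv {a : ℝ} (ha : |1 - a| < 1) (z : ℕ → ℝ) (h0 : z 0 = 1)
    (hrec : ∀ k, z (k + 1) = (1 / 2) * z k * (3 - a * z k ^ 2)) :
    Tendsto z atTop (nhds (1 / Real.sqrt a)) := by
  obtain ⟨q, hqdef⟩ : ∃ q, q = |1 - a| := ⟨_, rfl⟩
  rw [← hqdef] at ha
  have hq0 : 0 ≤ q := hqdef ▸ abs_nonneg _
  have ha0 : 0 < a := by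
    rcases abs_lt.mp (hqdef ▸ ha) with ⟨h1, h2⟩
    linarith
  obtain ⟨r, hrdef⟩ : ∃ r, r = q * (3 + q) / 4 := ⟨_, rfl⟩
  have hr0 : 0 ≤ r := by rw [hrdef]; positivity
  have hr1 : r < 1 := by nlinarith
  have key : ∀ k, 0 < z k ∧ |1 - a * z k ^ 2| ≤ q * r ^ k := by
    intro k
    induction k with
    | zero =>
      refine ⟨by rw [h0]; norm_num, ?_⟩
      rw [h0]; simp [hqdef]
    | succ k ih =>
      obtain ⟨hz, hw⟩ := ih
      have hrk0 : 0 ≤ r ^ k := pow_nonneg hr0 k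
      have hrk1 : r ^ k ≤ 1 := pow_le_one₀ hr0 hr1.le
      have hwq : |1 - a * z k ^ 2| ≤ q := le_trans hw (by nlinarith)
      have hwl := abs_le.mp hwq
      have hwl2 := abs_le.mp hw
      have hzk1 : 0 < z (k + 1) := by
        rw [hrec k]
        have h3 : 0 < 3 - a * z k ^ 2 := by nlinarith
        nlinarith
      refine ⟨hzk1, ?_⟩
      rw [hrec k]
      have hid : 1 - a * ((1 / 2) * z k * (3 - a * z k ^ 2)) ^ 2
          = (1 - a * z k ^ 2) ^ 2 * (4 - a * z k ^ 2) / 4 := by ring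
      rw [hid, abs_of_nonneg (by nlinarith)]
      have hP : (1 - a * z k ^ 2) ^ 2 ≤ q * r ^ k * q := by
        nlinarith [sq_abs (1 - a * z k ^ 2),
          mul_le_mul hw hwq (abs_nonneg _) (by positivity : (0:ℝ) ≤ q * r ^ k)]
      have h4 : 4 - a * z k ^ 2 ≤ 3 + q := by nlinarith
      have hprod : (1 - a * z k ^ 2) ^ 2 * (4 - a * z k ^ 2) ≤ q * r ^ k * q * (3 + q) :=
        mul_le_mul hP h4 (by nlinarith) (by positivity)
      have hfin : q * r ^ k * q * (3 + q) / 4 = q * r ^ (k + 1) := by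
        rw [pow_succ, hrdef]; ring
      linarith
  have hgeo : Tendsto (fun k => q * r ^ k) atTop (nhds 0) := by
    simpa using (tendsto_pow_atTop_nhds_zero_of_lt_one hr0 hr1).const_mul q
  have hw0 : Tendsto (fun k => 1 - a * z k ^ 2) atTop (nhds 0) :=
    squeeze_zero_norm (fun k => by simpa [Real.norm_eq_abs] using (key k).2) hgeo
  have hw1 : Tendsto (fun k => a * z k ^ 2) atTop (nhds 1) := by
    have h := (tendsto_const_nhds (x := (1:ℝ)) (f := (atTop : Filter ℕ))).sub hw0
    simpa using h
  have hzeq : ∀ k, z k = Real.sqrt (a * z k ^ 2) / Real.sqrt a := by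
    intro k
    rw [Real.sqrt_mul ha0.le, Real.sqrt_sq (key k).1.le,
      mul_div_cancel_left₀ _ (Real.sqrt_ne_zero'.mpr ha0)]
  have hlim : Tendsto (fun k => Real.sqrt (a * z k ^ 2) / Real.sqrt a) atTop
      (nhds (Real.sqrt 1 / Real.sqrt a)) :=
    ((Real.continuous_sqrt.tendsto 1).comp hw1).div_const _
  rw [Real.sqrt_one] at hlim
  exact hlim.congr (fun k => (hzeq k).symm)

/-- Newton–Schulz convergence: if `A` is symmetric positive definite with
`‖I - A‖ < 1`, then the scalar iteration `z_{k+1} = ½ z_k (3 - a z_k²)`, `z₀ = 1`,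
converges to `a^{-1/2}` for every eigenvalue `a` of `A`, and the matrix iteration
`Y₀ = A, Z₀ = I, T_k = 3I - Z_kY_k, Y_{k+1} = ½Y_kT_k, Z_{k+1} = ½T_kZ_k`
satisfies `Z_k → A^{-1/2} = S⁻¹`, where `S` is the positive-definite square root
of `A`. -/
theorem stmt12 {n : ℕ} (A : Matrix (Fin n) (Fin n) ℝ)
    (hsymm : A.IsSymm) (hpd : A.PosDef) (hnorm : opNorm (1 - A) < 1)
    (S : Matrix (Fin n) (Fin n) ℝ) (hS : S.PosDef) (hSsq : S * S = A) :
    (∀ a : ℝ, Module.End.HasEigenvalue (Matrix.toLin' A) a →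
      ∀ z : ℕ → ℝ, z 0 = 1 → (∀ k, z (k + 1) = (1 / 2) * z k * (3 - a * z k ^ 2)) →
        Tendsto z atTop (nhds (1 / Real.sqrt a))) ∧
    (∀ Y Z : ℕ → Matrix (Fin n) (Fin n) ℝ,
      Y 0 = A → Z 0 = 1 →
      (∀ k, Y (k + 1) =
        (1 / 2 : ℝ) • (Y k * (3 • (1 : Matrix (Fin n) (Fin n) ℝ) - Z k * Y k))) →
      (∀ k, Z (k + 1) =
        (1 / 2 : ℝ) • ((3 • (1 : Matrix (Fin n) (Fin n) ℝ) - Z k * Y k) * Z k)) →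
      Tendsto Z atTop (nhds S⁻¹)) := by
  have habs : ∀ (a : ℝ) (v : Fin n → ℝ), v ≠ 0 → A *ᵥ v = a • v → |1 - a| < 1 := by
    intro a v hv hmv
    have h1a : (1 - A) *ᵥ v = (1 - a) • v := by
      rw [Matrix.sub_mulVec, Matrix.one_mulVec, hmv, sub_smul, one_smul]
    exact lt_of_le_of_lt (eig_abs_le_opNorm (1 - A) hv h1a) hnorm
  constructor
  · intro a haeig z h0 hrec
    obtain ⟨v, hv⟩ := haeig.exists_hasEigenvector
    have hmv : A *ᵥ v = a • v := by
      have h := hv.apply_eq_smul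
      simpa [Matrix.toLin'_apply] using h
    exact scalar_conv (habs a v hv.right hmv) z h0 hrec
  · intro Y Z hY0 hZ0 hYrec hZrec
    have hH : A.IsHermitian := hpd.1
    set U : Matrix (Fin n) (Fin n) ℝ := (hH.eigenvectorUnitary : Matrix (Fin n) (Fin n) ℝ)
      with hUdef
    set eig : Fin n → ℝ := hH.eigenvalues with heigdef
    have hU1 : U * star U = 1 := mem_unitaryGroup_iff.mp (hH.eigenvectorUnitary).2
    have hU2 : star U * U = 1 := mem_unitaryGroup_iff'.mp (hH.eigenvectorUnitary).2
    set C : (Fin n → ℝ) → Matrix (Fin n) (Fin n) ℝ :=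
      fun d => U * diagonal d * star U with hCdef
    have hCmul : ∀ d e, C d * C e = C (fun i => d i * e i) := by
      intro d e
      simp only [hCdef]
      rw [mul_assoc (U * diagonal d) (star U),
        show star U * (U * diagonal e * star U) = diagonal e * star U by
          rw [← mul_assoc, ← mul_assoc, hU2, one_mul],
        ← mul_assoc, mul_assoc U, diagonal_mul_diagonal]
    have hCsmul : ∀ (c : ℝ) (d), c • C d = C (fun i => c * d i) := by
      intro c d
      simp only [hCdef]
      rw [show (fun i => c * d i) = c • d from rfl, Matrix.diagonal_smul,
        Matrix.mul_smul, Matrix.smul_mul]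
    have hCsub : ∀ d e, C d - C e = C (fun i => d i - e i) := by
      intro d e
      simp only [hCdef]
      rw [← Matrix.diagonal_sub, Matrix.mul_sub, Matrix.sub_mul]
    have hCone : C (fun _ => 1) = 1 := by
      simp only [hCdef]
      rw [show (diagonal (fun _ => (1:ℝ)) : Matrix (Fin n) (Fin n) ℝ) = 1 from diagonal_one,
        mul_one, hU1]
    have hC3 : (3 • (1 : Matrix (Fin n) (Fin n) ℝ)) = C (fun _ => 3) := by
      have h1 : C (fun i => (3:ℝ) * (fun _ => (1:ℝ)) i) = (3:ℝ) • C (fun _ => 1) :=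
        (hCsmul 3 (fun _ => 1)).symm
      rw [hCone] at h1
      have h2 : (3 • (1 : Matrix (Fin n) (Fin n) ℝ)) = (3:ℝ) • (1 : Matrix (Fin n) (Fin n) ℝ) := by
        rw [← Nat.cast_smul_eq_nsmul ℝ]
        norm_num
      rw [h2, ← h1]
      exact congrArg C (funext fun i => by norm_num)
    have hAC : A = C eig := by
      have h := hH.spectral_theorem
      rw [hCdef]
      simpa using h
    have main : ∀ k, Y k = C (fun i => eig i * nsIter (eig i) k) ∧
        Z k = C (fun i => nsIter (eig i) k) := by
      intro k
      induction k with
      | zero =>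
        constructor
        · rw [hY0, hAC]
          exact congrArg C (funext fun i => by simp [nsIter])
        · rw [hZ0, ← hCone]
          exact congrArg C (funext fun i => by simp [nsIter])
      | succ k ih =>
        obtain ⟨hYk, hZk⟩ := ih
        have hT : 3 • (1 : Matrix (Fin n) (Fin n) ℝ) - Z k * Y k
            = C (fun i => 3 - eig i * nsIter (eig i) k ^ 2) := by
          rw [hZk, hYk, hCmul, hC3, hCsub]
          exact congrArg C (funext fun i => by ring)
        constructor
        · rw [hYrec k, hT, hYk, hCmul, hCsmul]
          exact congrArg C (funext fun i => by
            rw [show nsIter (eig i) (k+1)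
              = (1/2) * nsIter (eig i) k * (3 - eig i * (nsIter (eig i) k) ^ 2) from rfl]
            ring)
        · rw [hZrec k, hT, hZk, hCmul, hCsmul]
          exact congrArg C (funext fun i => by
            rw [show nsIter (eig i) (k+1)
              = (1/2) * nsIter (eig i) k * (3 - eig i * (nsIter (eig i) k) ^ 2) from rfl]
            ring)
    -- eigenvalue bounds and scalar convergence
    have heig_lt : ∀ i, |1 - eig i| < 1 := by
      intro i
      have hmv := hH.mulVec_eigenvectorBasis i
      have hvne : (⇑(hH.eigenvectorBasis i) : Fin n → ℝ) ≠ 0 := by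
        intro hc
        apply hH.eigenvectorBasis.orthonormal.ne_zero i
        ext j
        exact congrFun hc j
      exact habs _ _ hvne hmv
    have heig_pos : ∀ i, 0 < eig i := fun i => hpd.eigenvalues_pos i
    have hdlim : Tendsto (fun k => fun i => nsIter (eig i) k) atTop
        (nhds (fun i => 1 / Real.sqrt (eig i))) := by
      rw [tendsto_pi_nhds]
      intro i
      exact scalar_conv (heig_lt i) (fun k => nsIter (eig i) k) rfl (fun k => rfl)
    have hCcont : Continuous C := by
      rw [hCdef]
      exact (continuous_const.matrix_mul (continuous_id.matrix_diagonal)).matrix_mul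
        continuous_const
    have hZtend : Tendsto Z atTop (nhds (C (fun i => 1 / Real.sqrt (eig i)))) := by
      have h := (hCcont.tendsto _).comp hdlim
      exact h.congr (fun k => ((main k).2).symm)
    -- identify the limit with S⁻¹
    have hSM : S = C (fun i => Real.sqrt (eig i)) := by
      have hM_ps : (C (fun i => Real.sqrt (eig i))).PosSemidef := by
        rw [hCdef]
        have hd : (diagonal (fun i => Real.sqrt (eig i)) : Matrix (Fin n) (Fin n) ℝ).PosSemidef :=
          posSemidef_diagonal_iff.mpr (fun i => Real.sqrt_nonneg _)
        simpa [Matrix.star_eq_conjTranspose] using hd.mul_mul_conjTranspose_same U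
      have hMM : C (fun i => Real.sqrt (eig i)) ^ 2 = A := by
        rw [sq, hCmul, hAC]
        exact congrArg C (funext fun i => Real.mul_self_sqrt (heig_pos i).le)
      open scoped MatrixOrder in
      exact (CFC.sqrt_unique hSsq hS.posSemidef.nonneg).symm.trans
        (CFC.sqrt_unique ((sq _).symm.trans hMM) hM_ps.nonneg)
    have hinv : S⁻¹ = C (fun i => 1 / Real.sqrt (eig i)) := by
      apply Matrix.inv_eq_left_inv
      rw [hSM, hCmul, ← hCone]
      exact congrArg C (funext fun i => by
        have h := Real.sqrt_ne_zero'.mpr (heig_pos i)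
        field_simp)
    rw [hinv]
    exact hZtend
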